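/- Let H be a real inner product space, σ > 0, and x₁, …, xₙ ∈ H distinct points. Then the Gaussian matrix [exp(-σ‖xᵢ - xⱼ‖²)]ᵢⱼ is positive definite, i.e., for all real scalars c₁,…,cₙ not all zero, ∑ᵢⱼ cᵢcⱼ exp(-σ‖xᵢ-xⱼ‖²) > 0. -/

import Mathlib

open MeasureTheory Real Finset RealInnerProductSpace
open scoped ENNReal

section Aux

variable {V : Type*} [NormedAddCommGroup V] [InnerProductSpace ℝ V] [FiniteDimensional ℝ V]
  [MeasurableSpace V] [BorelSpace V]

lemma integrable_rexp_neg_mul_sq_norm {b : ℝ} (hb : 0 < b) :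
    Integrable (fun v : V => rexp (-b * ‖v‖ ^ 2)) := by
  have h := (GaussianFourier.integrable_cexp_neg_mul_sq_norm_add (V := V) (b := (b : ℂ))
    (by simpa using hb) 0 0).norm
  refine h.congr (Filter.Eventually.of_forall fun v => ?_)
  simp [Complex.norm_exp, ← Complex.ofReal_pow]

omit [FiniteDimensional ℝ V] [MeasurableSpace V] [BorelSpace V] in
lemma gauss_key (σ : ℝ) (a b v : V) :
    -(2*σ) * ‖a - v‖ ^ 2 + -(2*σ) * ‖b - v‖ ^ 2
      = -(4*σ) * ‖v - (2⁻¹ : ℝ) • (a + b)‖ ^ 2 + -σ * ‖a - b‖ ^ 2 := by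
  have hpar := parallelogram_law_with_norm ℝ (a - v) (b - v)
  have h1 : (a - v) + (b - v) = (-2 : ℝ) • (v - (2⁻¹ : ℝ) • (a + b)) := by
    simp [smul_sub, smul_smul, two_smul, smul_add]
    abel
  have h2 : (a - v) - (b - v) = a - b := by abel
  have h3 : ‖(-2 : ℝ) • (v - (2⁻¹ : ℝ) • (a + b))‖ ^ 2
      = 4 * ‖v - (2⁻¹ : ℝ) • (a + b)‖ ^ 2 := by
    rw [norm_smul]; norm_num; ring
  rw [h1, h2, h3] at hpar
  linear_combination σ * hpar

lemma exists_inner_injective {n : ℕ} (y : Fin n → V) (hy : Function.Injective y) :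
    ∃ w : V, ∀ i j : Fin n, i ≠ j → (⟪y i, w⟫) ≠ (⟪y j, w⟫) := by
  classical
  set A : Set V := ⋃ (i : Fin n), ⋃ (j : Fin n), ⋃ (_ : i ≠ j),
    ((LinearMap.ker ((innerSL ℝ (y i - y j) : V →ₗ[ℝ] ℝ)) : Submodule ℝ V) : Set V) with hA
  have hA0 : volume A = 0 := by
    refine measure_iUnion_null fun i => measure_iUnion_null fun j => measure_iUnion_null fun hij => ?_
    refine Measure.addHaar_submodule _ _ fun htop => ?_
    have hmem : y i - y j ∈ LinearMap.ker ((innerSL ℝ (y i - y j) : V →ₗ[ℝ] ℝ)) := htop ▸ Submodule.mem_top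
    rw [LinearMap.mem_ker] at hmem
    simp only [ContinuousLinearMap.coe_coe, innerSL_apply_apply] at hmem
    rw [real_inner_self_eq_norm_sq] at hmem
    exact hij (hy (sub_eq_zero.mp (by
      have := sq_eq_zero_iff.mp hmem
      exact norm_eq_zero.mp this)))
  have hAne : A ≠ Set.univ := by
    intro h
    have : (0 : ℝ≥0∞) < volume A := h ▸ isOpen_univ.measure_pos volume ⟨0, trivial⟩
    simp [hA0] at this
  obtain ⟨w, hw⟩ : ∃ w, w ∉ A := by
    by_contra hcon
    push_neg at hcon
    exact hAne (Set.eq_univ_of_forall hcon)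
  refine ⟨w, fun i j hij heq => hw ?_⟩
  refine Set.mem_iUnion.mpr ⟨i, Set.mem_iUnion.mpr ⟨j, Set.mem_iUnion.mpr ⟨hij, ?_⟩⟩⟩
  simp only [SetLike.mem_coe, LinearMap.mem_ker, ContinuousLinearMap.coe_coe, innerSL_apply_apply]
  rw [inner_sub_left, heq, sub_self]

end Aux

section Main

variable {V : Type*} [NormedAddCommGroup V] [InnerProductSpace ℝ V] [FiniteDimensional ℝ V]
  [MeasurableSpace V] [BorelSpace V]

lemma gaussian_aux (σ : ℝ) (hσ : 0 < σ) (n : ℕ) (y : Fin n → V)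
    (hy : Function.Injective y) (c : Fin n → ℝ) (hc : c ≠ 0) :
    0 < ∑ i, ∑ j, c i * c j * rexp (-σ * ‖y i - y j‖ ^ 2) := by
  classical
  have h4σ : (0 : ℝ) < 4 * σ := by linarith
  set f : Fin n → V → ℝ := fun i v => rexp (-(2*σ) * ‖y i - v‖ ^ 2) with hf
  have hgauss := integrable_rexp_neg_mul_sq_norm (V := V) h4σ
  have hprod : ∀ (i j : Fin n) (v : V), f i v * f j v
      = rexp (-σ * ‖y i - y j‖ ^ 2) * rexp (-(4*σ) * ‖v - (2⁻¹:ℝ) • (y i + y j)‖ ^ 2) := by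
    intro i j v
    rw [hf, ← Real.exp_add, ← Real.exp_add, gauss_key σ (y i) (y j) v, add_comm]
  have hint : ∀ i j : Fin n, Integrable (fun v => f i v * f j v) := by
    intro i j
    simp only [hprod]
    exact (hgauss.comp_sub_right _).const_mul _
  set C := ∫ v : V, rexp (-(4*σ) * ‖v‖ ^ 2) with hC
  have hCpos : 0 < C := by
    rw [hC, GaussianFourier.integral_rexp_neg_mul_sq_norm h4σ]
    positivity
  have hIprod : ∀ i j : Fin n, ∫ v, f i v * f j v = rexp (-σ * ‖y i - y j‖ ^ 2) * C := by
    intro i j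
    simp only [hprod]
    rw [MeasureTheory.integral_const_mul]
    congr 1
    exact integral_sub_right_eq_self (fun v : V => rexp (-(4*σ) * ‖v‖ ^ 2)) _
  set h : V → ℝ := fun v => ∑ i, c i * f i v with hh
  have hsq : ∀ v, h v ^ 2 = ∑ i, ∑ j, (c i * c j) * (f i v * f j v) := by
    intro v
    rw [hh, sq, Finset.sum_mul_sum]
    exact Finset.sum_congr rfl fun i _ => Finset.sum_congr rfl fun j _ => by ring
  have hint2 : Integrable (fun v => h v ^ 2) := by
    simp only [hsq]
    exact integrable_finset_sum _ fun i _ =>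
      integrable_finset_sum _ fun j _ => (hint i j).const_mul _
  have hIsq : ∫ v, h v ^ 2 = C * ∑ i, ∑ j, c i * c j * rexp (-σ * ‖y i - y j‖ ^ 2) := by
    simp only [hsq]
    rw [integral_finset_sum _ fun i _ =>
      integrable_finset_sum _ fun j _ => (hint i j).const_mul _, Finset.mul_sum]
    refine Finset.sum_congr rfl fun i _ => ?_
    rw [integral_finset_sum _ fun j _ => (hint i j).const_mul _, Finset.mul_sum]
    refine Finset.sum_congr rfl fun j _ => ?_
    rw [MeasureTheory.integral_const_mul, hIprod i j]
    ring
  obtain ⟨i0, hi0⟩ := Function.ne_iff.mp hc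
  have hne : ∃ v, h v ≠ 0 := by
    by_contra hcon
    push_neg at hcon
    obtain ⟨w, hw⟩ := exists_inner_injective y hy
    set r : Fin n → ℝ := fun i => rexp (4*σ*⟪y i, w⟫) with hr
    have hrinj : Function.Injective r := by
      intro i j hij
      by_contra hne'
      exact hw i j hne' (mul_left_cancel₀ (by positivity) (Real.exp_injective hij))
    set d : Fin n → ℝ := fun i => c i * rexp (-(2*σ) * ‖y i‖ ^ 2) with hd
    have key : ∀ k : ℕ, ∑ i, d i * r i ^ k = 0 := by
      intro k
      have h0 := hcon ((k : ℝ) • w)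
      rw [hh] at h0
      have expand : ∀ i, c i * f i ((k:ℝ) • w)
          = (d i * r i ^ k) * rexp (-(2*σ) * ‖(k:ℝ) • w‖ ^ 2) := by
        intro i
        have hnorm : ‖y i - (k:ℝ) • w‖ ^ 2
            = ‖y i‖ ^ 2 - 2 * ((k:ℝ) * ⟪y i, w⟫) + ‖(k:ℝ) • w‖ ^ 2 := by
          rw [norm_sub_sq_real, real_inner_smul_right]
        have harith : -(2*σ) * ‖y i - (k:ℝ) • w‖ ^ 2
            = (-(2*σ) * ‖y i‖ ^ 2) + ((k:ℕ) * (4*σ*⟪y i, w⟫))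
              + (-(2*σ) * ‖(k:ℝ) • w‖ ^ 2) := by
          rw [hnorm]; push_cast; ring
        rw [hf]
        simp only []
        rw [harith, Real.exp_add, Real.exp_add, Real.exp_nat_mul, hd, hr]
        ring
      simp only [expand] at h0
      rw [← Finset.sum_mul] at h0
      exact (mul_eq_zero.mp h0).resolve_right (Real.exp_ne_zero _)
    have hd0 : d ≠ 0 := by
      intro hzero
      have := congrFun hzero i0
      rw [hd] at this
      simp only [Pi.zero_apply, mul_eq_zero] at this
      exact this.elim hi0 (Real.exp_ne_zero _)
    set M : Matrix (Fin n) (Fin n) ℝ := Matrix.of fun k i => r i ^ (k : ℕ) with hM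
    have hMv : M.mulVec d = 0 := by
      funext k
      simpa [hM, Matrix.mulVec, dotProduct, mul_comm] using key k
    have hdet : M.det ≠ 0 := by
      have hMt : M = (Matrix.vandermonde r).transpose := rfl
      rw [hMt, Matrix.det_transpose, Matrix.det_vandermonde]
      refine Finset.prod_ne_zero_iff.mpr fun i _ => Finset.prod_ne_zero_iff.mpr fun j hj =>
        sub_ne_zero.mpr fun hrr => ?_
      exact (Finset.mem_Ioi.mp hj).ne' (hrinj hrr)
    exact hd0 (Matrix.eq_zero_of_mulVec_eq_zero hdet hMv)
  obtain ⟨v0, hv0⟩ := hne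
  have hpos : 0 < ∫ v, h v ^ 2 := by
    rw [integral_pos_iff_support_of_nonneg (fun v => sq_nonneg _) hint2]
    have hcont : Continuous h := by
      rw [hh]
      exact continuous_finset_sum _ fun i _ => continuous_const.mul
        (Real.continuous_exp.comp (continuous_const.mul
          (((continuous_const.sub continuous_id).norm.pow 2))))
    have hopen : IsOpen (Function.support fun v => h v ^ 2) := by
      have : (Function.support fun v => h v ^ 2) = (fun v => h v ^ 2) ⁻¹' {0}ᶜ := by
        ext v; simp [Function.mem_support]
      rw [this]
      exact (hcont.pow 2).isOpen_preimage _ isOpen_compl_singleton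
    refine hopen.measure_pos volume ⟨v0, ?_⟩
    simp only [Function.mem_support]
    exact pow_ne_zero 2 hv0
  rw [hIsq] at hpos
  nlinarith [hCpos, hpos]

end Main

/-- The Gaussian kernel on a real inner product space is strictly positive
definite: its interpolation matrix at distinct points is positive definite. -/
theorem gaussian_strictly_pos_def {H : Type*} [NormedAddCommGroup H]
    [InnerProductSpace ℝ H] (σ : ℝ) (hσ : 0 < σ) (n : ℕ) (x : Fin n → H)
    (hx : Function.Injective x) (c : Fin n → ℝ) (hc : c ≠ 0) :
    0 < ∑ i, ∑ j, c i * c j * Real.exp (-σ * ‖x i - x j‖ ^ 2) := by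
  classical
  set W := Submodule.span ℝ (Set.range x) with hW
  haveI : FiniteDimensional ℝ W := FiniteDimensional.span_of_finite ℝ (Set.finite_range x)
  letI : MeasurableSpace W := borel W
  haveI : BorelSpace W := ⟨rfl⟩
  set y : Fin n → W := fun i => ⟨x i, Submodule.subset_span (Set.mem_range_self i)⟩ with hy
  have hyinj : Function.Injective y := fun i j hij => hx (congrArg Subtype.val hij)
  have key := gaussian_aux σ hσ n y hyinj c hc
  have hnorm : ∀ i j, ‖y i - y j‖ = ‖x i - x j‖ := fun i j => rfl
  calc (0:ℝ) < ∑ i, ∑ j, c i * c j * rexp (-σ * ‖y i - y j‖ ^ 2) := key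
    _ = ∑ i, ∑ j, c i * c j * Real.exp (-σ * ‖x i - x j‖ ^ 2) := by
        exact Finset.sum_congr rfl fun i _ => Finset.sum_congr rfl fun j _ => by
          rw [hnorm]
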